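/- arXiv:2003.12014 — 2 statements merged into one kernel-verified Lean document; each statement's English description precedes it below -/
import Mathlib

section
/- A subset A of X_G is large if and only if for every free ultrafilter p on X the orbit Gp meets A* = {q : A ∈ q}; i.e., Δ_p(A) ≠ ∅ for each p ∈ X*. -/
open Set

/-- A coarse structure on a set `X`. -/
structure CoarseStructure (X : Type*) where
  sets : Set (Set (X × X))
  diagonal_mem : ∀ E ∈ sets, ∀ x : X, (x, x) ∈ E
  comp_mem : ∀ E ∈ sets, ∀ E' ∈ sets,
    {q : X × X | ∃ z : X, (q.1, z) ∈ E ∧ (z, q.2) ∈ E'} ∈ sets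
  inv_mem : ∀ E ∈ sets, {q : X × X | (q.2, q.1) ∈ E} ∈ sets
  subset_mem : ∀ E ∈ sets, ∀ E', E' ⊆ E → (∀ x : X, (x, x) ∈ E') → E' ∈ sets
  covers : ⋃₀ sets = Set.univ

/-- The ball `E[A]`. -/
def ball {X : Type*} (E : Set (X × X)) (A : Set X) : Set X := {y | ∃ a ∈ A, (a, y) ∈ E}

/-- A bounded subset of a coarse space. -/
def CoarseStructure.Bounded {X : Type*} (C : CoarseStructure X) (B : Set X) : Prop :=
  ∃ E ∈ C.sets, ∃ x : X, B ⊆ ball E {x}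

/-- A finitary coarse space: uniformly finite balls. -/
def CoarseStructure.Finitary {X : Type*} (C : CoarseStructure X) : Prop :=
  ∀ E ∈ C.sets, ∃ n : ℕ, ∀ x : X, (ball E {x}).Finite ∧ (ball E {x}).ncard < n

/-- The set `X^♯` of ultrafilters all of whose members are unbounded. -/
def CoarseStructure.Sharp {X : Type*} (C : CoarseStructure X) : Set (Ultrafilter X) :=
  {p | ∀ P ∈ p, ¬ C.Bounded P}

/-- The parallelity relation on ultrafilters. -/
def CoarseStructure.Parallel {X : Type*} (C : CoarseStructure X) (p q : Ultrafilter X) : Prop :=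
  ∃ E ∈ C.sets, ∀ P ∈ p, ball E P ∈ q

/-- The entourage determined by a set of permutations. -/
def entourage {X : Type*} (F : Set (Equiv.Perm X)) : Set (X × X) :=
  {q | ∃ g ∈ F, q.2 = g q.1}

/-- The finitary coarse structure `X_G` determined by a group `G` of permutations of `X`:
its entourages are the diagonal-containing subsets of `{(x,gx) : x ∈ X, g ∈ F}`
for finite `F ⊆ G` with `id ∈ F`. -/
def XGsets {X : Type*} (G : Subgroup (Equiv.Perm X)) : Set (Set (X × X)) :=
  {E | (∀ x : X, (x, x) ∈ E) ∧ ∃ F : Finset (Equiv.Perm X),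
    (1 : Equiv.Perm X) ∈ F ∧ ↑F ⊆ (G : Set (Equiv.Perm X)) ∧ E ⊆ entourage ↑F}

/-- A free ultrafilter. -/
def IsFree {X : Type*} (p : Ultrafilter X) : Prop := (p : Filter X) ≤ Filter.cofinite

/-- `X*`, the space of free ultrafilters with the Stone topology. -/
def FreeUF (X : Type*) : Type _ := {p : Ultrafilter X // IsFree p}

instance (X : Type*) : TopologicalSpace (FreeUF X) :=
  instTopologicalSpaceSubtype

/-- The orbit `Gp` of an ultrafilter under the induced action `gp = {gP : P ∈ p}`. -/
def ufOrbit {X : Type*} (G : Subgroup (Equiv.Perm X)) (p : Ultrafilter X) :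
    Set (Ultrafilter X) :=
  {q | ∃ g ∈ G, q = Ultrafilter.map (⇑g) p}

/-- The `p`-companion `Δ_p(A) = A* ∩ Gp`. -/
def compan {X : Type*} (G : Subgroup (Equiv.Perm X)) (p : Ultrafilter X) (A : Set X) :
    Set (Ultrafilter X) :=
  {q | A ∈ q ∧ q ∈ ufOrbit G p}

/-- Large subsets of `X_G`. -/
def IsLarge {X : Type*} (G : Subgroup (Equiv.Perm X)) (A : Set X) : Prop :=
  ∃ E ∈ XGsets G, ball E A = Set.univ

/-- Thick subsets of `X_G`. -/
def IsThick {X : Type*} (G : Subgroup (Equiv.Perm X)) (A : Set X) : Prop :=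
  ∀ E ∈ XGsets G, ∃ a ∈ A, ball E {a} ⊆ A

/-- Thin (discrete) subsets of `X_G`. -/
def IsThin {X : Type*} (G : Subgroup (Equiv.Perm X)) (A : Set X) : Prop :=
  ∀ E ∈ XGsets G, ∃ B : Set X, B.Finite ∧ ∀ a ∈ A \ B, ball E {a} ∩ A = {a}

/-- Sparse subsets of `X_G`. -/
def IsSparse {X : Type*} (G : Subgroup (Equiv.Perm X)) (A : Set X) : Prop :=
  ∀ p : Ultrafilter X, IsFree p → (compan G p A).Finite

/-- Scattered subsets of `X_G`. -/
def IsScattered {X : Type*} (G : Subgroup (Equiv.Perm X)) (A : Set X) : Prop :=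
  ∀ Y ⊆ A, Y.Infinite →
    ∃ p : Ultrafilter X, IsFree p ∧ Y ∈ p ∧ (compan G p Y).Finite

/-- Close subsets of a coarse space. -/
def CoarseStructure.Close {X : Type*} (C : CoarseStructure X) (A B : Set X) : Prop :=
  ∃ E ∈ C.sets, A ⊆ ball E B ∧ B ⊆ ball E A

/-- Close subsets of `X_G`. -/
def CloseG {X : Type*} (G : Subgroup (Equiv.Perm X)) (A B : Set X) : Prop :=
  ∃ E ∈ XGsets G, A ⊆ ball E B ∧ B ⊆ ball E A

/-- Linked subsets of `X_G`. -/
def LinkedG {X : Type*} (G : Subgroup (Equiv.Perm X)) (A B : Set X) : Prop :=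
  (A.Finite ∧ B.Finite) ∨
    ∃ A' ⊆ A, ∃ B' ⊆ B, A'.Infinite ∧ B'.Infinite ∧ CloseG G A' B'


open Set

/-- The `n`-th block `{g_0^{ε_0} ⋯ g_n^{ε_n} x_n : ε_i ∈ {0,1}}`. -/
def pwBlock {X : Type*} (g : ℕ → Equiv.Perm X) (x : ℕ → X) (n : ℕ) : Set X :=
  {y | ∃ ε : Fin (n + 1) → Bool,
    y = ((List.ofFn fun i : Fin (n + 1) =>
      (g i) ^ (if ε i then 1 else 0)).prod : Equiv.Perm X) (x n)}

/-- A piece-wise shifted FP-set determined by the group `G`. -/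
def IsPWShiftedFP {X : Type*} (G : Subgroup (Equiv.Perm X)) (Y : Set X) : Prop :=
  ∃ g : ℕ → Equiv.Perm X, ∃ x : ℕ → X,
    (∀ n, g n ∈ G) ∧
    (∀ m n, m ≠ n → Disjoint (pwBlock g x m) (pwBlock g x n)) ∧
    (∀ n, (pwBlock g x n).ncard = 2 ^ (n + 1)) ∧
    Y = ⋃ n, pwBlock g x n

/-- The group of all self-homeomorphisms of a topological space, as a subgroup
of the permutation group. -/
def homeoSubgroup (X : Type*) [TopologicalSpace X] : Subgroup (Equiv.Perm X) where
  carrier := {g | Continuous g ∧ Continuous g.symm}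
  one_mem' := ⟨continuous_id, continuous_id⟩
  mul_mem' := by
    rintro a b ⟨ha1, ha2⟩ ⟨hb1, hb2⟩
    refine ⟨?_, ?_⟩
    · simpa [Equiv.Perm.mul_def, Equiv.coe_trans] using ha1.comp hb1
    · simpa [Equiv.Perm.mul_def, Equiv.symm_trans_apply] using (hb2.comp ha2 : _)
  inv_mem' := by
    rintro a ⟨ha1, ha2⟩
    exact ⟨ha2, by exact ha1⟩


/-- The parallelity relation on ultrafilters over the coarse space `X_G`. -/
def ParallelG {X : Type*} (G : Subgroup (Equiv.Perm X)) (p q : Ultrafilter X) : Prop :=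
  ∃ E ∈ XGsets G, ∀ P ∈ p, ball E P ∈ q

/-- Linked subsets of a coarse space. -/
def CoarseStructure.Linked {X : Type*} (C : CoarseStructure X) (A B : Set X) : Prop :=
  (C.Bounded A ∧ C.Bounded B) ∨
    ∃ A' ⊆ A, ∃ B' ⊆ B, ¬ C.Bounded A' ∧ ¬ C.Bounded B' ∧ C.Close A' B'

/-- The orbit `Gp` viewed as a subset of the space `X*` of free ultrafilters. -/
def freeOrbit {X : Type*} (G : Subgroup (Equiv.Perm X)) (p : Ultrafilter X) :
    Set (FreeUF X) :=
  {q | q.1 ∈ ufOrbit G p}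

/-- If finitely many translates `g⁻¹' A`, `g ∈ H ⊆ G`, cover `X`, then `A` is large. -/
lemma isLarge_of_finite_cover {X : Type*} (G : Subgroup (Equiv.Perm X))
    (A : Set X) (H : Finset (Equiv.Perm X)) (hHG : ↑H ⊆ (G : Set (Equiv.Perm X)))
    (hcov : ∀ y : X, ∃ g ∈ H, g y ∈ A) : IsLarge G A := by
  classical
  refine ⟨entourage ↑(H.image (·⁻¹) ∪ {1}), ⟨?_, H.image (·⁻¹) ∪ {1}, ?_, ?_, subset_rfl⟩, ?_⟩
  · intro x
    exact ⟨1, by simp, by simp⟩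
  · simp
  · intro g hg
    simp only [Finset.coe_union, Finset.coe_image, Set.mem_union, Set.mem_image,
      Finset.mem_coe, Finset.coe_singleton, Set.mem_singleton_iff] at hg
    rcases hg with ⟨h, hh, rfl⟩ | rfl
    · exact inv_mem (hHG hh)
    · exact one_mem G
  · ext y
    simp only [Set.mem_univ, iff_true]
    obtain ⟨g, hgH, hgy⟩ := hcov y
    refine ⟨g y, hgy, g⁻¹, ?_, ?_⟩
    · simp only [Finset.coe_union, Finset.coe_image, Set.mem_union, Set.mem_image,
        Finset.mem_coe]
      exact Or.inl ⟨g, hgH, rfl⟩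
    · simp

/-- Key claim: if `A` is not large, finite intersections of complements of
translates are infinite. -/
lemma infinite_inter_of_not_large {X : Type*} [Infinite X] (G : Subgroup (Equiv.Perm X))
    (htrans : ∀ x y : X, ∃ g ∈ G, g x = y) (A : Set X) (hnl : ¬ IsLarge G A)
    (H : Finset (Equiv.Perm X)) (hHG : ↑H ⊆ (G : Set (Equiv.Perm X))) :
    (⋂ g ∈ H, ((⇑g) ⁻¹' A)ᶜ).Infinite := by
  classical
  by_contra hfin
  rw [Set.not_infinite] at hfin
  set C := ⋂ g ∈ H, ((⇑g) ⁻¹' A)ᶜ with hC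
  obtain ⟨a0, ha0⟩ : A.Nonempty := by
    rcases A.eq_empty_or_nonempty with rfl | h
    · exact ((Set.infinite_univ (α := X)) (by simpa [hC] using hfin)).elim
    · exact h
  set φ : X → Equiv.Perm X := fun x => (htrans x a0).choose with hφ
  have hφspec : ∀ x : X, φ x ∈ G ∧ φ x x = a0 := fun x => (htrans x a0).choose_spec
  apply hnl
  refine isLarge_of_finite_cover G A (H ∪ hfin.toFinset.image φ) ?_ ?_
  · intro g hg
    rcases Finset.mem_union.mp hg with hg | hg
    · exact hHG hg
    · obtain ⟨x, _, rfl⟩ := Finset.mem_image.mp hg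
      exact (hφspec x).1
  · intro y
    by_cases hy : y ∈ C
    · refine ⟨φ y, ?_, ?_⟩
      · exact Finset.mem_union_right _ (Finset.mem_image_of_mem φ (hfin.mem_toFinset.mpr hy))
      · rw [(hφspec y).2]; exact ha0
    · simp only [hC, Set.mem_iInter, Set.mem_compl_iff, Set.mem_preimage, not_forall,
        not_not] at hy
      obtain ⟨g, hgH, hgy⟩ := hy
      exact ⟨g, Finset.mem_union_left _ hgH, hgy⟩

/-- A subset `A` of `X_G` is large iff `Δ_p(A) ≠ ∅` for every free
ultrafilter `p` on `X`. -/
theorem large_iff_companions_nonempty {X : Type*} [Infinite X]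
    (G : Subgroup (Equiv.Perm X)) (htrans : ∀ x y : X, ∃ g ∈ G, g x = y)
    (A : Set X) :
    IsLarge G A ↔ ∀ p : Ultrafilter X, IsFree p → compan G p A ≠ ∅ := by
  classical
  constructor
  · rintro ⟨E, ⟨hdiag, F, h1F, hFG, hEF⟩, hball⟩ p _
    have hU : (⋃ g ∈ F, ⇑g '' A) ∈ p := by
      have hmem : ball E A ∈ p := by rw [hball]; exact Filter.univ_mem
      refine p.toFilter.mem_of_superset hmem ?_
      rintro y ⟨a, ha, hE'⟩
      obtain ⟨g, hgF, hgy⟩ := hEF hE'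
      exact Set.mem_biUnion hgF ⟨a, ha, hgy.symm⟩
    obtain ⟨g, hgF, hgp⟩ :=
      (Ultrafilter.finite_biUnion_mem_iff F.finite_toSet).mp hU
    intro hcon
    have hmem : Ultrafilter.map ⇑(g⁻¹) p ∈ compan G p A := by
      refine ⟨?_, g⁻¹, inv_mem (hFG hgF), rfl⟩
      rw [Ultrafilter.mem_map]
      have himg : (⇑(g⁻¹)) ⁻¹' A = ⇑g '' A := by
        ext x
        simp [Set.mem_image, Equiv.Perm.inv_def, Equiv.symm_apply_eq, eq_comm]
      rw [himg]; exact hgp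
    rw [hcon] at hmem
    exact hmem
  · intro h
    by_contra hnl
    set S : Set (Set X) := {s | ∃ g ∈ G, s = ((⇑g) ⁻¹' A)ᶜ} with hS
    have hne : (Filter.cofinite ⊓ Filter.generate S).NeBot := by
      rw [Filter.inf_neBot_iff]
      intro U hU V hV
      rw [Filter.mem_generate_iff] at hV
      obtain ⟨t, htS, htfin, htV⟩ := hV
      -- present ⋂₀ t as an intersection over a finset of perms
      have hfs : t ⊆ S → ∃ H : Finset (Equiv.Perm X), ↑H ⊆ (G : Set (Equiv.Perm X)) ∧
          (⋂ g ∈ H, ((⇑g) ⁻¹' A)ᶜ) ⊆ ⋂₀ t := by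
        refine Set.Finite.induction_on t htfin ?_ ?_
        · exact fun _ => ⟨∅, by simp, by simp⟩
        · intro s t _ _ ih hsub
          obtain ⟨H, hHG, hHsub⟩ := ih (fun x hx => hsub (Set.mem_insert_of_mem _ hx))
          obtain ⟨g, hg, rfl⟩ := hsub (Set.mem_insert s t)
          refine ⟨insert g H, ?_, ?_⟩
          · intro x hx
            rcases Finset.mem_insert.mp hx with rfl | hx
            · exact hg
            · exact hHG hx
          · intro x hx
            simp only [Finset.mem_insert, Set.mem_iInter] at hx
            rw [Set.sInter_insert]
            exact ⟨hx g (Or.inl rfl), hHsub (Set.mem_iInter₂.mpr fun i hi => hx i (Or.inr hi))⟩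
      obtain ⟨H, hHG, hHsub⟩ := hfs htS
      have hinf := infinite_inter_of_not_large G htrans A hnl H hHG
      have : ((⋂ g ∈ H, ((⇑g) ⁻¹' A)ᶜ) ∩ U).Infinite := by
        rw [Filter.mem_cofinite] at hU
        have := hinf.diff hU
        refine this.mono ?_
        intro x hx
        exact ⟨hx.1, by simpa using hx.2⟩
      obtain ⟨x, hx1, hx2⟩ := this.nonempty
      exact ⟨x, hx2, htV (hHsub hx1)⟩
    obtain ⟨p, hp⟩ := Filter.exists_ultrafilter_le (Filter.cofinite ⊓ Filter.generate S)
    have hpfree : IsFree p := le_trans hp inf_le_left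
    have hempty : compan G p A = ∅ := by
      ext q
      simp only [compan, ufOrbit, Set.mem_setOf_eq, Set.mem_empty_iff_false, iff_false]
      rintro ⟨hAq, g, hg, rfl⟩
      have hcompl : ((⇑g) ⁻¹' A)ᶜ ∈ p :=
        le_trans hp inf_le_right (Filter.mem_generate_of_mem ⟨g, hg, rfl⟩)
      rw [Ultrafilter.mem_map] at hAq
      exact (Ultrafilter.compl_mem_iff_notMem.mp hcompl) hAq
    exact h p hpfree hempty
end

section
/- There exist 2^𝔠 distinct λ-tight finitary coarse structures on ω that are not δ-tight. -/
open Set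

open Set

/-! ## Auxiliary development -/

section Aux
open Filter

attribute [local instance] Classical.propDecidable

namespace ManyCS


/-! ### Part A: there are `2^𝔠` free ultrafilters on `ℕ` -/

abbrev T : Type := Finset ℕ × Finset (Finset ℕ)

noncomputable instance : Denumerable T := Denumerable.ofEncodableOfInfinite T

/-- The basic independent family indexed by subsets of `ℕ`. -/
def IX (X : Set ℕ) : Set T := {t | ∃ B ∈ t.2, (B : Set ℕ) = (t.1 : Set ℕ) ∩ X}

noncomputable def sepPt (X Y : Set ℕ) : ℕ :=
  if h : ∃ n, ¬ (n ∈ X ↔ n ∈ Y) then h.choose else 0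

lemma sepPt_spec {X Y : Set ℕ} (h : X ≠ Y) : ¬ (sepPt X Y ∈ X ↔ sepPt X Y ∈ Y) := by
  have hex : ∃ n, ¬ (n ∈ X ↔ n ∈ Y) := by
    by_contra hc
    push_neg at hc
    exact h (Set.ext fun n => hc n)
  simpa [sepPt, hex] using hex.choose_spec

/-- Core combinatorial lemma: boolean combinations of the `IX` are infinite. -/
lemma inter_infinite (ε : Set ℕ → Bool) (𝒳 : Finset (Set ℕ)) :
    (⋂ X ∈ 𝒳, (if ε X then IX X else (IX X)ᶜ)).Infinite := by
  -- separating finite set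
  set A₀ : Finset ℕ := 𝒳.biUnion (fun X => 𝒳.image (fun Y => sepPt X Y)) with hA₀
  have hsep : ∀ A : Finset ℕ, A₀ ⊆ A → ∀ X ∈ 𝒳, ∀ Y ∈ 𝒳,
      (↑A ∩ X : Set ℕ) = ↑A ∩ Y → X = Y := by
    intro A hAA X hX Y hY hxy
    by_contra hne
    have hmem : sepPt X Y ∈ A₀ :=
      Finset.mem_biUnion.2 ⟨X, hX, Finset.mem_image.2 ⟨Y, hY, rfl⟩⟩
    have hmem' : sepPt X Y ∈ (A : Set ℕ) := hAA hmem
    have := sepPt_spec hne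
    have h1 : sepPt X Y ∈ (↑A ∩ X : Set ℕ) ↔ sepPt X Y ∈ (↑A ∩ Y : Set ℕ) := by rw [hxy]
    simp only [Set.mem_inter_iff, hmem', true_and] at h1
    exact this h1
  -- the witnesses
  set tA : ℕ → T := fun m =>
    (insert m A₀, ((𝒳.filter (fun X => ε X)).image (fun X => (insert m A₀).filter (· ∈ X))))
    with htA
  have hmemJ : ∀ m, ∀ X ∈ 𝒳, tA m ∈ (if ε X then IX X else (IX X)ᶜ) := by
    intro m X hX
    have hsub : A₀ ⊆ insert m A₀ := Finset.subset_insert _ _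
    by_cases hε : ε X
    · simp only [hε, if_true]
      refine ⟨(insert m A₀).filter (· ∈ X), ?_, ?_⟩
      · exact Finset.mem_image.2 ⟨X, Finset.mem_filter.2 ⟨hX, hε⟩, rfl⟩
      · ext n; simp [htA, Finset.mem_filter, Set.mem_inter_iff]
    · simp only [hε, if_false]
      rintro ⟨B, hB, hBX⟩
      obtain ⟨X', hX', rfl⟩ := Finset.mem_image.1 hB
      obtain ⟨hX'𝒳, hεX'⟩ := Finset.mem_filter.1 hX'
      have hco : ((insert m A₀).filter (· ∈ X') : Set ℕ) = (↑(insert m A₀) : Set ℕ) ∩ X' := by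
        ext n; simp [Finset.mem_filter, Set.mem_inter_iff]
      have : (↑(insert m A₀) : Set ℕ) ∩ X' = ↑(insert m A₀) ∩ X := by
        rw [← hco]; exact hBX
      have hXX' : X' = X := hsep _ hsub X' hX'𝒳 X hX this
      rw [hXX'] at hεX'
      simp [hεX'] at hε
  have hinj : Set.InjOn tA ((↑A₀ : Set ℕ)ᶜ) := by
    intro m hm m' hm' h
    have h1 : (insert m A₀ : Finset ℕ) = insert m' A₀ := congrArg Prod.fst h
    have : m' ∈ insert m A₀ := h1 ▸ Finset.mem_insert_self m' A₀
    rcases Finset.mem_insert.1 this with h2 | h2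
    · exact h2.symm
    · exact absurd h2 (by simpa using hm')
  have hsubset : tA '' ((↑A₀ : Set ℕ)ᶜ) ⊆ ⋂ X ∈ 𝒳, (if ε X then IX X else (IX X)ᶜ) := by
    rintro t ⟨m, _, rfl⟩
    exact Set.mem_iInter₂.2 fun X hX => hmemJ m X hX
  exact ((Set.Finite.infinite_compl (A₀.finite_toSet)).image hinj).mono hsubset

/-- The sub-basis for the ultrafilter `pOf ε`. -/
def basis (ε : Set ℕ → Bool) : Set (Set T) :=
  Set.range (fun X : Set ℕ => if ε X then IX X else (IX X)ᶜ)

lemma sInter_infinite {ε : Set ℕ → Bool} {t : Set (Set T)} (ht : t ⊆ basis ε)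
    (htf : t.Finite) : (⋂₀ t).Infinite := by
  choose f hf using fun s (hs : s ∈ t) => ht hs
  set 𝒳 : Finset (Set ℕ) := (htf.image (fun s => if hs : s ∈ t then f s hs else ∅)).toFinset
    with h𝒳
  have hsub : (⋂ X ∈ 𝒳, (if ε X then IX X else (IX X)ᶜ)) ⊆ ⋂₀ t := by
    intro x hx s hs
    have hX : (if hs' : s ∈ t then f s hs' else ∅) ∈ 𝒳 := by
      rw [h𝒳, Set.Finite.mem_toFinset]; exact ⟨s, hs, rfl⟩
    have := Set.mem_iInter₂.1 hx _ hX
    simpa [dif_pos hs, hf s hs] using this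
  exact (inter_infinite ε 𝒳).mono hsub

lemma filter_neBot (ε : Set ℕ → Bool) :
    (Filter.generate (basis ε) ⊓ Filter.cofinite).NeBot := by
  rw [← Filter.forall_mem_nonempty_iff_neBot]
  intro s hs
  rw [Filter.mem_inf_iff] at hs
  obtain ⟨t₁, ht₁, t₂, ht₂, rfl⟩ := hs
  obtain ⟨u, hu_sub, hu_fin, hu⟩ := Filter.mem_generate_iff.1 ht₁
  have hinf : ((⋂₀ u) \ t₂ᶜ).Infinite := (sInter_infinite hu_sub hu_fin).diff ht₂
  obtain ⟨x, hx⟩ := hinf.nonempty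
  exact ⟨x, hu hx.1, by simpa using hx.2⟩

noncomputable def pOf (ε : Set ℕ → Bool) : Ultrafilter T :=
  (@Ultrafilter.exists_le T (Filter.generate (basis ε) ⊓ Filter.cofinite)
    (filter_neBot ε)).choose

lemma pOf_le (ε : Set ℕ → Bool) :
    (pOf ε : Filter T) ≤ Filter.generate (basis ε) ⊓ Filter.cofinite :=
  (@Ultrafilter.exists_le T (Filter.generate (basis ε) ⊓ Filter.cofinite)
    (filter_neBot ε)).choose_spec

lemma pOf_free (ε : Set ℕ → Bool) : (pOf ε : Filter T) ≤ Filter.cofinite :=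
  (pOf_le ε).trans inf_le_right

lemma mem_pOf (ε : Set ℕ → Bool) (X : Set ℕ) :
    (if ε X then IX X else (IX X)ᶜ) ∈ pOf ε := by
  have h1 : (if ε X then IX X else (IX X)ᶜ) ∈ Filter.generate (basis ε) :=
    Filter.GenerateSets.basic ⟨X, rfl⟩
  exact (pOf_le ε).trans inf_le_left h1

/-- The equivalence `T ≃ ℕ`. -/
noncomputable def eT : T ≃ ℕ := Denumerable.eqv T

noncomputable def qOf (ε : Set ℕ → Bool) : Ultrafilter ℕ := Ultrafilter.map eT (pOf ε)

lemma qOf_free (ε : Set ℕ → Bool) : (qOf ε : Filter ℕ) ≤ Filter.cofinite := by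
  intro s hs
  have hsc : (sᶜ : Set ℕ).Finite := hs
  have : (eT ⁻¹' s)ᶜ = eT ⁻¹' sᶜ := by rw [Set.preimage_compl]
  have hfin : (eT ⁻¹' s)ᶜ.Finite := by
    rw [this]; exact hsc.preimage (eT.injective.injOn)
  have : eT ⁻¹' s ∈ Filter.cofinite := hfin
  have := pOf_free ε this
  exact Ultrafilter.mem_map.2 this

lemma qOf_injective : Function.Injective qOf := by
  intro ε ε' h
  by_contra hne
  have : ∃ X, ε X ≠ ε' X := by
    by_contra hc; push_neg at hc; exact hne (funext hc)
  obtain ⟨X, hX⟩ := this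
  -- wlog with cases
  have key : ∀ ε ε' : Set ℕ → Bool, ε X = true → ε' X = false → qOf ε = qOf ε' → False := by
    intro ε ε' h1 h2 heq
    have hm1 : IX X ∈ pOf ε := by simpa [h1] using mem_pOf ε X
    have hm2 : (IX X)ᶜ ∈ pOf ε' := by simpa [h2] using mem_pOf ε' X
    have hq1 : eT '' IX X ∈ qOf ε :=
      Ultrafilter.mem_map.2 (by rwa [Set.preimage_image_eq _ eT.injective])
    have hq2 : eT '' (IX X)ᶜ ∈ qOf ε' :=
      Ultrafilter.mem_map.2 (by rwa [Set.preimage_image_eq _ eT.injective])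
    rw [heq] at hq1
    have : eT '' IX X ∩ eT '' (IX X)ᶜ ∈ qOf ε' := Filter.inter_mem hq1 hq2
    have hdisj : eT '' IX X ∩ eT '' (IX X)ᶜ = ∅ := by
      rw [← Set.image_inter eT.injective]; simp
    rw [hdisj] at this
    exact Filter.empty_notMem _ this
  cases hb1 : ε X <;> cases hb2 : ε' X
  · rw [hb1, hb2] at hX; exact hX rfl
  · exact key ε' ε hb2 hb1 h.symm
  · exact key ε ε' hb1 hb2 h
  · rw [hb1, hb2] at hX; exact hX rfl




/-! ### Part B: the coarse structure of a group of permutations -/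

/-- The coarse structure `X_G`, for a group containing all transpositions. -/
noncomputable def coarseOfGroup (G : Subgroup (Equiv.Perm ℕ))
    (hsw : ∀ a b : ℕ, Equiv.swap a b ∈ G) : CoarseStructure ℕ where
  sets := XGsets G
  diagonal_mem E hE x := hE.1 x
  comp_mem := by
    rintro E ⟨hd, F, h1F, hFG, hEF⟩ E' ⟨hd', F', h1F', hF'G, hE'F⟩
    refine ⟨fun x => ⟨x, hd x, hd' x⟩,
      (F ×ˢ F').image (fun gg => gg.2 * gg.1), ?_, ?_, ?_⟩
    · exact Finset.mem_image.2 ⟨(1, 1), Finset.mem_product.2 ⟨h1F, h1F'⟩, by simp⟩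
    · intro g hg
      simp only [Finset.coe_image, Set.mem_image, Finset.mem_coe, Finset.mem_product] at hg
      obtain ⟨⟨a, b⟩, ⟨ha, hb⟩, rfl⟩ := hg
      exact G.mul_mem (hF'G hb) (hFG ha)
    · rintro ⟨x, y⟩ ⟨z, hxz, hzy⟩
      obtain ⟨g, hg, hz⟩ := hEF hxz
      obtain ⟨g', hg', hy⟩ := hE'F hzy
      refine ⟨g' * g, ?_, ?_⟩
      · simp only [Finset.coe_image, Set.mem_image, Finset.mem_coe, Finset.mem_product]
        exact ⟨(g, g'), ⟨hg, hg'⟩, rfl⟩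
      · simp only [Equiv.Perm.mul_apply]
        rw [← hz]; exact hy
  inv_mem := by
    rintro E ⟨hd, F, h1F, hFG, hEF⟩
    refine ⟨fun x => hd x, F.image (·⁻¹), ?_, ?_, ?_⟩
    · exact Finset.mem_image.2 ⟨1, h1F, by simp⟩
    · intro g hg
      simp only [Finset.coe_image, Set.mem_image, Finset.mem_coe] at hg
      obtain ⟨a, ha, rfl⟩ := hg
      exact G.inv_mem (hFG ha)
    · rintro ⟨x, y⟩ hxy
      obtain ⟨g, hg, hx⟩ := hEF hxy
      refine ⟨g⁻¹, ?_, ?_⟩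
      · simp only [Finset.coe_image, Set.mem_image, Finset.mem_coe]
        exact ⟨g, hg, rfl⟩
      · show y = g⁻¹ x
        simp only [hx] at *
        simp [hx]
  subset_mem := by
    rintro E ⟨hd, F, h1F, hFG, hEF⟩ E' hsub hd'
    exact ⟨hd', F, h1F, hFG, hsub.trans hEF⟩
  covers := by
    apply Set.eq_univ_of_forall
    rintro ⟨x, y⟩
    refine ⟨{q : ℕ × ℕ | q.1 = q.2 ∨ q = (x, y)}, ⟨fun z => Or.inl rfl,
      {1, Equiv.swap x y}, Finset.mem_insert_self _ _, ?_, ?_⟩, Or.inr rfl⟩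
    · intro g hg
      simp only [Finset.coe_insert, Finset.coe_singleton, Set.mem_insert_iff,
        Set.mem_singleton_iff] at hg
      rcases hg with rfl | rfl
      · exact G.one_mem
      · exact hsw x y
    · rintro ⟨a, b⟩ hab
      rcases hab with h | h
      · exact ⟨1, by simp, h.symm⟩
      · refine ⟨Equiv.swap x y, by simp, ?_⟩
        have h1 : a = x := congrArg Prod.fst h
        have h2 : b = y := congrArg Prod.snd h
        simp [h1, h2, Equiv.swap_apply_left]

lemma coarseOfGroup_sets (G : Subgroup (Equiv.Perm ℕ)) (hsw : ∀ a b : ℕ, Equiv.swap a b ∈ G) :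
    (coarseOfGroup G hsw).sets = XGsets G := rfl

lemma ball_subset {F : Finset (Equiv.Perm ℕ)} {E : Set (ℕ × ℕ)}
    (hEF : E ⊆ entourage ↑F) (A : Set ℕ) :
    ball E A ⊆ ⋃ g ∈ (↑F : Set (Equiv.Perm ℕ)), (⇑g) '' A := by
  rintro y ⟨a, ha, hay⟩
  obtain ⟨g, hg, hy⟩ := hEF hay
  exact Set.mem_biUnion hg ⟨a, ha, hy.symm⟩

lemma finitary (G : Subgroup (Equiv.Perm ℕ)) (hsw : ∀ a b : ℕ, Equiv.swap a b ∈ G) :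
    (coarseOfGroup G hsw).Finitary := by
  rintro E ⟨hd, F, h1F, hFG, hEF⟩
  refine ⟨F.card + 1, fun x => ?_⟩
  have hsub : ball E {x} ⊆ (fun g : Equiv.Perm ℕ => g x) '' ↑F := by
    rintro y ⟨a, ha, hay⟩
    rcases Set.mem_singleton_iff.1 ha with rfl
    obtain ⟨g, hg, hy⟩ := hEF hay
    exact ⟨g, hg, hy.symm⟩
  have hfin : ((fun g : Equiv.Perm ℕ => g x) '' ↑F).Finite := F.finite_toSet.image _
  refine ⟨hfin.subset hsub, Nat.lt_succ_of_le ?_⟩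
  calc (ball E {x}).ncard ≤ ((fun g : Equiv.Perm ℕ => g x) '' ↑F).ncard :=
      Set.ncard_le_ncard hsub hfin
    _ ≤ (↑F : Set (Equiv.Perm ℕ)).ncard := Set.ncard_image_le F.finite_toSet
    _ = F.card := Set.ncard_coe_finset F

lemma finite_of_bounded {G : Subgroup (Equiv.Perm ℕ)} {hsw : ∀ a b : ℕ, Equiv.swap a b ∈ G}
    {B : Set ℕ} (hB : (coarseOfGroup G hsw).Bounded B) : B.Finite := by
  obtain ⟨E, ⟨hd, F, h1F, hFG, hEF⟩, x, hsub⟩ := hB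
  have h1 : ball E {x} ⊆ (fun g : Equiv.Perm ℕ => g x) '' ↑F := by
    rintro y ⟨a, ha, hay⟩
    rcases Set.mem_singleton_iff.1 ha with rfl
    obtain ⟨g, hg, hy⟩ := hEF hay
    exact ⟨g, hg, hy.symm⟩
  exact ((F.finite_toSet.image _).subset h1).subset hsub

lemma bounded_of_finite {G : Subgroup (Equiv.Perm ℕ)} {hsw : ∀ a b : ℕ, Equiv.swap a b ∈ G}
    {B : Set ℕ} (hB : B.Finite) : (coarseOfGroup G hsw).Bounded B := by
  refine ⟨{q : ℕ × ℕ | q.1 = q.2 ∨ (q.1 = 0 ∧ q.2 ∈ B)}, ⟨fun x => Or.inl rfl,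
    insert 1 (hB.toFinset.image (fun b => Equiv.swap 0 b)), Finset.mem_insert_self _ _,
    ?_, ?_⟩, 0, ?_⟩
  · intro g hg
    simp only [Finset.coe_insert, Set.mem_insert_iff, Finset.coe_image, Set.mem_image,
      Finset.mem_coe, Set.Finite.mem_toFinset] at hg
    rcases hg with rfl | ⟨b, _, rfl⟩
    · exact G.one_mem
    · exact hsw 0 b
  · rintro ⟨a, b⟩ hab
    rcases hab with h | ⟨h1, h2⟩
    · exact ⟨1, by simp, h.symm⟩
    · refine ⟨Equiv.swap 0 b, ?_, ?_⟩
      · simp only [Finset.coe_insert, Set.mem_insert_iff, Finset.coe_image, Set.mem_image,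
          Finset.mem_coe, Set.Finite.mem_toFinset]
        exact Or.inr ⟨b, h2, rfl⟩
      · show b = Equiv.swap 0 b a
        rw [show a = 0 from h1]
        exact (Equiv.swap_apply_left 0 b).symm
  · intro b hb
    exact ⟨0, rfl, Or.inr ⟨rfl, hb⟩⟩

lemma unbounded_iff_infinite {G : Subgroup (Equiv.Perm ℕ)} {hsw : ∀ a b : ℕ, Equiv.swap a b ∈ G}
    {B : Set ℕ} : ¬ (coarseOfGroup G hsw).Bounded B ↔ B.Infinite := by
  exact ⟨fun h hf => h (bounded_of_finite hf), fun hi hb => hi (finite_of_bounded hb)⟩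




/-! ### The stabilizer group of an ultrafilter -/

/-- The group of permutations fixing the ultrafilter `p`. -/
def stabG (p : Ultrafilter ℕ) : Subgroup (Equiv.Perm ℕ) where
  carrier := {g | Ultrafilter.map (⇑g) p = p}
  one_mem' := by
    show Ultrafilter.map ⇑(1 : Equiv.Perm ℕ) p = p
    have : ⇑(1 : Equiv.Perm ℕ) = id := rfl
    rw [this]
    exact p.map_id
  mul_mem' := by
    intro a b ha hb
    show Ultrafilter.map ⇑(a * b) p = p
    have : ⇑(a * b) = ⇑a ∘ ⇑b := rfl
    rw [this, ← Ultrafilter.map_map, hb, ha]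
  inv_mem' := by
    intro a ha
    show Ultrafilter.map ⇑a⁻¹ p = p
    conv_lhs => rw [← ha]
    rw [Ultrafilter.map_map]
    have h2 : ⇑a⁻¹ ∘ ⇑a = id := funext fun x => a.symm_apply_apply x
    rw [h2]
    exact p.map_id

lemma mem_stabG {p : Ultrafilter ℕ} {g : Equiv.Perm ℕ} :
    g ∈ stabG p ↔ Ultrafilter.map (⇑g) p = p := Iff.rfl

lemma stab_mem_iff {p : Ultrafilter ℕ} {g : Equiv.Perm ℕ} (hg : g ∈ stabG p) (s : Set ℕ) :
    s ∈ p ↔ ⇑g ⁻¹' s ∈ p := by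
  conv_lhs => rw [← mem_stabG.1 hg]
  exact Ultrafilter.mem_map

lemma mem_iff_inter {p : Ultrafilter ℕ} {T : Set ℕ} (hT : T ∈ p) (s : Set ℕ) :
    s ∈ p ↔ s ∩ T ∈ p :=
  ⟨fun h => Filter.inter_mem h hT, fun h => Filter.mem_of_superset h Set.inter_subset_left⟩

/-- A permutation whose support is not a member of `p` fixes `p`. -/
lemma support_stab {p : Ultrafilter ℕ} {σ : Equiv.Perm ℕ}
    (h : {x | σ x ≠ x} ∉ p) : σ ∈ stabG p := by
  have hSc : {x | σ x ≠ x}ᶜ ∈ p := Ultrafilter.compl_mem_iff_notMem.2 h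
  rw [mem_stabG]
  apply Ultrafilter.coe_injective
  apply Filter.ext
  intro s
  rw [Ultrafilter.mem_coe, Ultrafilter.mem_coe, Ultrafilter.mem_map]
  have key : ⇑σ ⁻¹' s ∩ {x | σ x ≠ x}ᶜ = s ∩ {x | σ x ≠ x}ᶜ := by
    ext x
    simp only [Set.mem_inter_iff, Set.mem_preimage, Set.mem_compl_iff, Set.mem_setOf_eq,
      not_not]
    constructor
    · rintro ⟨h1, h2⟩; exact ⟨h2 ▸ h1, h2⟩
    · rintro ⟨h1, h2⟩; exact ⟨h2.symm ▸ h1, h2⟩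
  rw [mem_iff_inter hSc (⇑σ ⁻¹' s), key, ← mem_iff_inter hSc s]

/-- A permutation that agrees everywhere with some member of a finite set of
permutations fixing `q` also fixes `q`. -/
lemma piecewise_stab {q : Ultrafilter ℕ} {F : Finset (Equiv.Perm ℕ)}
    (hF : ↑F ⊆ (stabG q : Set (Equiv.Perm ℕ))) {σ : Equiv.Perm ℕ}
    (h : ∀ x : ℕ, ∃ g ∈ F, σ x = g x) : σ ∈ stabG q := by
  have hcover : (⋃ g ∈ (↑F : Set (Equiv.Perm ℕ)), {x | σ x = g x}) ∈ q := by
    have : (⋃ g ∈ (↑F : Set (Equiv.Perm ℕ)), {x : ℕ | σ x = g x}) = Set.univ := by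
      apply Set.eq_univ_of_forall
      intro x
      obtain ⟨g, hg, hgx⟩ := h x
      exact Set.mem_biUnion (Finset.mem_coe.2 hg) hgx
    rw [this]
    exact Filter.univ_mem
  obtain ⟨g, hgF, hSg⟩ := (Ultrafilter.finite_biUnion_mem_iff F.finite_toSet).1 hcover
  have hg : g ∈ stabG q := hF hgF
  rw [mem_stabG]
  apply Ultrafilter.coe_injective
  apply Filter.ext
  intro s
  rw [Ultrafilter.mem_coe, Ultrafilter.mem_coe, Ultrafilter.mem_map]
  have key : ⇑σ ⁻¹' s ∩ {x | σ x = g x} = ⇑g ⁻¹' s ∩ {x | σ x = g x} := by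
    ext x
    simp only [Set.mem_inter_iff, Set.mem_preimage, Set.mem_setOf_eq]
    constructor
    · rintro ⟨h1, h2⟩; exact ⟨h2 ▸ h1, h2⟩
    · rintro ⟨h1, h2⟩; exact ⟨h2.symm ▸ h1, h2⟩
  rw [mem_iff_inter hSg (⇑σ ⁻¹' s), key, ← mem_iff_inter hSg (⇑g ⁻¹' s),
    ← stab_mem_iff hg s]

/-- All transpositions fix a free ultrafilter. -/
lemma finite_not_mem_free {p : Ultrafilter ℕ} (hp : IsFree p) {s : Set ℕ}
    (hs : s.Finite) : s ∉ p := by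
  intro hmem
  have h1 : sᶜ ∈ Filter.cofinite := by
    simp only [Filter.mem_cofinite, compl_compl]
    exact hs
  have h2 : sᶜ ∈ p := hp h1
  exact Ultrafilter.compl_notMem_iff.2 hmem h2

lemma swap_mem_stab {p : Ultrafilter ℕ} (hp : IsFree p) (a b : ℕ) :
    Equiv.swap a b ∈ stabG p := by
  apply support_stab
  apply finite_not_mem_free hp
  apply Set.Finite.subset ((Set.finite_singleton b).insert a)
  intro x hx
  simp only [Set.mem_setOf_eq] at hx
  by_contra hxab
  simp only [Set.mem_insert_iff, Set.mem_singleton_iff, not_or] at hxab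
  exact hx (Equiv.swap_apply_of_ne_of_ne hxab.1 hxab.2)

/-! ### Swap permutations of disjoint infinite sets -/

lemma exists_swap_perm {A B : Set ℕ} (hA : A.Infinite) (hB : B.Infinite)
    (hd : Disjoint A B) :
    ∃ σ : Equiv.Perm ℕ, (∀ x, σ x ≠ x → x ∈ A ∪ B) ∧ (∀ a ∈ A, σ a ∈ B) ∧
      (∀ b ∈ B, σ b ∈ A) ∧ (∀ x, σ (σ x) = x) := by
  haveI : Infinite ↥A := hA.to_subtype
  haveI : Infinite ↥B := hB.to_subtype
  haveI : Denumerable ↥A := Denumerable.ofEncodableOfInfinite ↥A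
  haveI : Denumerable ↥B := Denumerable.ofEncodableOfInfinite ↥B
  set e : ↥A ≃ ↥B := (Denumerable.eqv ↥A).trans (Denumerable.eqv ↥B).symm with he
  have hAB : ∀ x, x ∈ A → x ∉ B := fun x hx => Set.disjoint_left.1 hd hx
  set f : ℕ → ℕ := fun x =>
    if h : x ∈ A then (e ⟨x, h⟩ : ℕ) else if h : x ∈ B then (e.symm ⟨x, h⟩ : ℕ) else x
    with hf
  have hfA : ∀ x (h : x ∈ A), f x = (e ⟨x, h⟩ : ℕ) := fun x h => by
    simp only [hf, dif_pos h]
  have hfB : ∀ x (h : x ∈ B), f x = (e.symm ⟨x, h⟩ : ℕ) := fun x h => by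
    have hxA : x ∉ A := fun hc => hAB x hc h
    simp only [hf, dif_neg hxA, dif_pos h]
  have hfO : ∀ x, x ∉ A → x ∉ B → f x = x := fun x h1 h2 => by
    simp only [hf, dif_neg h1, dif_neg h2]
  have hinv : Function.Involutive f := by
    intro x
    by_cases hxA : x ∈ A
    · rw [hfA x hxA]
      have hmem : (e ⟨x, hxA⟩ : ℕ) ∈ B := (e ⟨x, hxA⟩).2
      rw [hfB _ hmem]
      have : (⟨(e ⟨x, hxA⟩ : ℕ), hmem⟩ : ↥B) = e ⟨x, hxA⟩ := Subtype.ext rfl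
      rw [this, Equiv.symm_apply_apply]
    · by_cases hxB : x ∈ B
      · rw [hfB x hxB]
        have hmem : (e.symm ⟨x, hxB⟩ : ℕ) ∈ A := (e.symm ⟨x, hxB⟩).2
        rw [hfA _ hmem]
        have : (⟨(e.symm ⟨x, hxB⟩ : ℕ), hmem⟩ : ↥A) = e.symm ⟨x, hxB⟩ := Subtype.ext rfl
        rw [this, Equiv.apply_symm_apply]
      · rw [hfO x hxA hxB, hfO x hxA hxB]
  refine ⟨hinv.toPerm, ?_, ?_, ?_, ?_⟩
  · intro x hx
    by_contra hc
    simp only [Set.mem_union, not_or] at hc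
    exact hx (hfO x hc.1 hc.2)
  · intro a ha
    show f a ∈ B
    rw [hfA a ha]
    exact (e ⟨a, ha⟩).2
  · intro b hb
    show f b ∈ A
    rw [hfB b hb]
    exact (e.symm ⟨b, hb⟩).2
  · intro x
    exact hinv x

/-! ### Splitting infinite sets -/

lemma exists_split {A : Set ℕ} (hA : A.Infinite) :
    ∃ B ⊆ A, B.Infinite ∧ (A \ B).Infinite := by
  set F : ℕ ↪ ↥A := hA.natEmbedding
  set u : ℕ → ℕ := fun n => (F (2 * n) : ℕ) with hu
  set v : ℕ → ℕ := fun n => (F (2 * n + 1) : ℕ) with hv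
  have hFinj : Function.Injective (fun n => (F n : ℕ)) :=
    Subtype.coe_injective.comp F.injective
  refine ⟨Set.range u, ?_, ?_, ?_⟩
  · rintro x ⟨n, rfl⟩; exact (F (2 * n)).2
  · apply Set.infinite_range_of_injective
    intro n m h
    have := hFinj h
    omega
  · have hsub : Set.range v ⊆ A \ Set.range u := by
      rintro x ⟨n, rfl⟩
      refine ⟨(F (2 * n + 1)).2, ?_⟩
      rintro ⟨m, hm⟩
      have := hFinj hm
      omega
    have hvinf : (Set.range v).Infinite := by
      apply Set.infinite_range_of_injective
      intro n m h
      have := hFinj h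
      omega
    exact hvinf.mono hsub

lemma exists_disjoint_infinite_subsets {A B : Set ℕ} (hA : A.Infinite) (hB : B.Infinite) :
    ∃ A' ⊆ A, ∃ B' ⊆ B, A'.Infinite ∧ B'.Infinite ∧ Disjoint A' B' := by
  by_cases h : (A ∩ B).Infinite
  · obtain ⟨C, hCsub, hCinf, hCdinf⟩ := exists_split h
    exact ⟨C, hCsub.trans Set.inter_subset_left, (A ∩ B) \ C,
      Set.diff_subset.trans Set.inter_subset_right, hCinf, hCdinf,
      Set.disjoint_sdiff_right⟩
  · rw [Set.not_infinite] at h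
    refine ⟨A \ B, Set.diff_subset, B \ A, Set.diff_subset, ?_, ?_, ?_⟩
    · have h2 : A \ (A ∩ B) = A \ B := Set.diff_self_inter
      exact h2 ▸ hA.diff h
    · have h2 : B \ (A ∩ B) = B \ A := by rw [Set.inter_comm]; exact Set.diff_self_inter
      exact h2 ▸ hB.diff h
    · exact disjoint_sdiff_sdiff




/-- The entourage of `{1, σ}` is in `XGsets G` whenever `σ ∈ G`. -/
lemma entourage_pair_mem {G : Subgroup (Equiv.Perm ℕ)} {σ : Equiv.Perm ℕ} (hσ : σ ∈ G) :
    entourage (↑({1, σ} : Finset (Equiv.Perm ℕ))) ∈ XGsets G := by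
  refine ⟨fun x => ⟨1, by simp, rfl⟩, {1, σ}, Finset.mem_insert_self _ _, ?_,
    subset_rfl⟩
  intro g hg
  simp only [Finset.coe_insert, Finset.coe_singleton, Set.mem_insert_iff,
    Set.mem_singleton_iff] at hg
  rcases hg with rfl | rfl
  · exact G.one_mem
  · exact hσ

/-- λ-tightness core: two infinite sets with union avoiding `p` can be swapped. -/
lemma close_of_swap {p : Ultrafilter ℕ} (hp : IsFree p) {A' B' : Set ℕ}
    (hA' : A'.Infinite) (hB' : B'.Infinite) (hd : Disjoint A' B')
    (hup : A' ∪ B' ∉ p) :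
    (coarseOfGroup (stabG p) (swap_mem_stab hp)).Close A' B' := by
  obtain ⟨σ, hsupp, hAB, hBA, hinv⟩ := exists_swap_perm hA' hB' hd
  have hσ : σ ∈ stabG p := by
    apply support_stab
    intro hmem
    exact hup (Filter.mem_of_superset hmem (fun x hx => hsupp x hx))
  refine ⟨entourage (↑({1, σ} : Finset (Equiv.Perm ℕ))), entourage_pair_mem hσ, ?_, ?_⟩
  · intro a ha
    refine ⟨σ a, hAB a ha, σ, ?_, (hinv a).symm⟩
    simp
  · intro b hb
    refine ⟨σ b, hBA b hb, σ, ?_, (hinv b).symm⟩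
    simp

lemma linked (p : Ultrafilter ℕ) (hp : IsFree p) (A B : Set ℕ)
    (hA : ¬ (coarseOfGroup (stabG p) (swap_mem_stab hp)).Bounded A)
    (hB : ¬ (coarseOfGroup (stabG p) (swap_mem_stab hp)).Bounded B) :
    (coarseOfGroup (stabG p) (swap_mem_stab hp)).Linked A B := by
  rw [unbounded_iff_infinite] at hA hB
  obtain ⟨A₀, hA₀A, B₀, hB₀B, hA₀, hB₀, hdis⟩ := exists_disjoint_infinite_subsets hA hB
  obtain ⟨A₁, hA₁sub, hA₁, hA₂⟩ := exists_split hA₀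
  obtain ⟨B₁, hB₁sub, hB₁, hB₂⟩ := exists_split hB₀
  have hd1 : Disjoint A₁ B₁ := hdis.mono hA₁sub hB₁sub
  have hd2 : Disjoint (A₀ \ A₁) (B₀ \ B₁) :=
    hdis.mono Set.diff_subset Set.diff_subset
  have hAd : Disjoint (A₁ ∪ B₁) ((A₀ \ A₁) ∪ (B₀ \ B₁)) := by
    rw [Set.disjoint_union_left]
    constructor
    · rw [Set.disjoint_union_right]
      exact ⟨Set.disjoint_sdiff_right, (hdis.mono hA₁sub Set.diff_subset)⟩
    · rw [Set.disjoint_union_right]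
      exact ⟨(hdis.mono Set.diff_subset hB₁sub).symm, Set.disjoint_sdiff_right⟩
  have hcases : (A₁ ∪ B₁) ∉ p ∨ ((A₀ \ A₁) ∪ (B₀ \ B₁)) ∉ p := by
    by_contra hc
    push_neg at hc
    have : (A₁ ∪ B₁) ∩ ((A₀ \ A₁) ∪ (B₀ \ B₁)) ∈ p := Filter.inter_mem hc.1 hc.2
    rw [Set.disjoint_iff_inter_eq_empty.1 hAd] at this
    exact Filter.empty_notMem _ this
  rcases hcases with h | h
  · refine Or.inr ⟨A₁, hA₁sub.trans hA₀A, B₁, hB₁sub.trans hB₀B, ?_, ?_, ?_⟩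
    · rw [unbounded_iff_infinite]; exact hA₁
    · rw [unbounded_iff_infinite]; exact hB₁
    · exact close_of_swap hp hA₁ hB₁ hd1 h
  · refine Or.inr ⟨A₀ \ A₁, (Set.diff_subset).trans hA₀A, B₀ \ B₁,
      (Set.diff_subset).trans hB₀B, ?_, ?_, ?_⟩
    · rw [unbounded_iff_infinite]; exact hA₂
    · rw [unbounded_iff_infinite]; exact hB₂
    · exact close_of_swap hp hA₂ hB₂ hd2 h

/-- If `P ∈ p` and `Pᶜ ∉ p`, then `P` and `Pᶜ` are not close in `X_{G_p}`. -/
lemma not_close (p : Ultrafilter ℕ) (hp : IsFree p) {P : Set ℕ} (hP : P ∈ p) :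
    ¬ (coarseOfGroup (stabG p) (swap_mem_stab hp)).Close P Pᶜ := by
  rintro ⟨E, ⟨hd, F, h1F, hFG, hEF⟩, hPball, -⟩
  have hsub : ball E Pᶜ ⊆ ⋃ g ∈ (↑F : Set (Equiv.Perm ℕ)), (⇑g) '' Pᶜ := ball_subset hEF Pᶜ
  have hmem : (⋃ g ∈ (↑F : Set (Equiv.Perm ℕ)), (⇑g) '' Pᶜ) ∈ p :=
    Filter.mem_of_superset hP (hPball.trans hsub)
  obtain ⟨g, hgF, hg⟩ := (Ultrafilter.finite_biUnion_mem_iff F.finite_toSet).1 hmem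
  have hgstab : g ∈ stabG p := hFG hgF
  have : ⇑g ⁻¹' (⇑g '' Pᶜ) ∈ p := (stab_mem_iff hgstab _).1 hg
  rw [Set.preimage_image_eq _ g.injective] at this
  exact Ultrafilter.compl_notMem_iff.2 hP this

/-- The evens or the odds witnesses non-δ-tightness. -/
lemma not_deltaTight (p : Ultrafilter ℕ) (hp : IsFree p) :
    ¬ (∀ A B : Set ℕ, ¬ (coarseOfGroup (stabG p) (swap_mem_stab hp)).Bounded A →
        ¬ (coarseOfGroup (stabG p) (swap_mem_stab hp)).Bounded B →
        (coarseOfGroup (stabG p) (swap_mem_stab hp)).Close A B) := by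
  intro hδ
  have heven : {n : ℕ | Even n}.Infinite := by
    apply Set.infinite_of_injective_forall_mem (f := fun n : ℕ => 2 * n)
      (hi := fun n m h => by simp only [] at h; omega)
    intro n; exact ⟨n, by ring⟩
  have hodd : {n : ℕ | Even n}ᶜ.Infinite := by
    apply Set.infinite_of_injective_forall_mem (f := fun n : ℕ => 2 * n + 1)
      (hi := fun n m h => by simp only [] at h; omega)
    intro n; simp [Nat.even_add_one, parity_simps]
  rcases p.mem_or_compl_mem {n : ℕ | Even n} with hmem | hmem
  · exact not_close p hp hmem
      (hδ _ _ (unbounded_iff_infinite.2 heven) (unbounded_iff_infinite.2 hodd))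
  · have := not_close p hp hmem
      (hδ _ _ (unbounded_iff_infinite.2 hodd) (unbounded_iff_infinite.2 (by
        rw [compl_compl]; exact heven)))
    exact this
  
/-! ### Distinctness -/

lemma exists_mem_diff {p q : Ultrafilter ℕ} (hne : p ≠ q) :
    ∃ P : Set ℕ, P ∈ q ∧ P ∉ p := by
  have : ∃ s : Set ℕ, ¬ (s ∈ p ↔ s ∈ q) := by
    by_contra hc
    push_neg at hc
    exact hne (Ultrafilter.coe_injective (Filter.ext fun s => hc s))
  obtain ⟨s, hs⟩ := this
  by_cases hsp : s ∈ p
  · have hsq : s ∉ q := fun h => hs ⟨fun _ => h, fun _ => hsp⟩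
    exact ⟨sᶜ, Ultrafilter.compl_mem_iff_notMem.2 hsq,
      Ultrafilter.compl_notMem_iff.2 hsp⟩
  · have hsq : s ∈ q := by
      by_contra hsq
      exact hs ⟨fun h => absurd h hsp, fun h => absurd h hsq⟩
    exact ⟨s, hsq, hsp⟩

lemma stab_sets_ne {p q : Ultrafilter ℕ} (hp : IsFree p) (hq : IsFree q)
    (hne : p ≠ q) : XGsets (stabG p) ≠ XGsets (stabG q) := by
  obtain ⟨P, hPq, hPp⟩ := exists_mem_diff hne
  have hPinf : P.Infinite := fun hfin => finite_not_mem_free hq hfin hPq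
  obtain ⟨Q₁, hQ₁sub, hQ₁, hQ₂⟩ := exists_split hPinf
  set Q₂ : Set ℕ := P \ Q₁ with hQ₂def
  have hdisj : Disjoint Q₁ Q₂ := Set.disjoint_sdiff_right
  have hunion : Q₁ ∪ Q₂ = P := Set.union_diff_cancel hQ₁sub
  obtain ⟨σ, hsupp, h12, h21, hinv⟩ := exists_swap_perm hQ₁ hQ₂ hdisj
  have hσp : σ ∈ stabG p := by
    apply support_stab
    intro hmem
    apply hPp
    apply Filter.mem_of_superset hmem
    intro x hx
    rw [← hunion]
    exact hsupp x hx
  intro hsets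
  have hE : entourage (↑({1, σ} : Finset (Equiv.Perm ℕ))) ∈ XGsets (stabG q) := by
    rw [← hsets]
    exact entourage_pair_mem hσp
  obtain ⟨hdiag, F, h1F, hFq, hEF⟩ := hE
  have hσq : σ ∈ stabG q := by
    apply piecewise_stab hFq
    intro x
    have hx : (x, σ x) ∈ entourage (↑({1, σ} : Finset (Equiv.Perm ℕ))) :=
      ⟨σ, by simp, rfl⟩
    obtain ⟨g, hg, hgx⟩ := hEF hx
    exact ⟨g, Finset.mem_coe.1 hg, hgx⟩
  -- derive contradiction
  have hor : Q₁ ∈ q ∨ Q₂ ∈ q := by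
    rw [← Ultrafilter.union_mem_iff, hunion]
    exact hPq
  have hkey : ∀ R S : Set ℕ, R ∈ q → Disjoint R S → (∀ x ∈ R, σ x ∈ S) → False := by
    intro R S hR hdRS hmap
    have h1 : R ⊆ ⇑σ ⁻¹' S := fun x hx => hmap x hx
    have h2 : ⇑σ ⁻¹' S ∈ q := Filter.mem_of_superset hR h1
    have h3 : S ∈ q := (stab_mem_iff hσq S).2 h2
    have h4 : R ∩ S ∈ q := Filter.inter_mem hR h3
    rw [Set.disjoint_iff_inter_eq_empty.1 hdRS] at h4
    exact Filter.empty_notMem _ h4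
  rcases hor with h | h
  · exact hkey Q₁ Q₂ h hdisj h12
  · exact hkey Q₂ Q₁ h hdisj.symm h21




/-! ### Cardinality of the set of free ultrafilters -/

lemma card_free_ultrafilters :
    Cardinal.mk {p : Ultrafilter ℕ // IsFree p} = 2 ^ Cardinal.continuum := by
  apply le_antisymm
  · calc Cardinal.mk {p : Ultrafilter ℕ // IsFree p}
        ≤ Cardinal.mk (Ultrafilter ℕ) := Cardinal.mk_subtype_le _
      _ ≤ Cardinal.mk (Set (Set ℕ)) := by
          apply Cardinal.mk_le_of_injective
            (f := fun p : Ultrafilter ℕ => ((p : Filter ℕ).sets : Set (Set ℕ)))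
          intro p q h
          exact Ultrafilter.coe_injective (Filter.filter_eq h)
      _ = 2 ^ Cardinal.mk (Set ℕ) := Cardinal.mk_set
      _ = 2 ^ Cardinal.continuum := by
          rw [Cardinal.mk_set, Cardinal.mk_nat, Cardinal.two_power_aleph0]
  · have hinj : Function.Injective
        (fun ε : Set ℕ → Bool => (⟨qOf ε, qOf_free ε⟩ : {p : Ultrafilter ℕ // IsFree p})) :=
      fun ε ε' h => qOf_injective (congrArg Subtype.val h)
    calc (2 : Cardinal) ^ Cardinal.continuum
        = Cardinal.mk Bool ^ Cardinal.mk (Set ℕ) := by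
          rw [Cardinal.mk_bool, Cardinal.mk_set, Cardinal.mk_nat,
            Cardinal.two_power_aleph0]
      _ = Cardinal.mk (Set ℕ → Bool) := Cardinal.power_def Bool (Set ℕ)
      _ ≤ Cardinal.mk {p : Ultrafilter ℕ // IsFree p} := Cardinal.mk_le_of_injective hinj

/-! ### Final assembly -/

noncomputable def CpF (p : {p : Ultrafilter ℕ // IsFree p}) : CoarseStructure ℕ :=
  coarseOfGroup (stabG p.1) (swap_mem_stab p.2)

lemma CpF_injective : Function.Injective CpF := by
  intro p q h
  by_contra hne
  have hne1 : p.1 ≠ q.1 := fun h' => hne (Subtype.ext h')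
  have hsets : XGsets (stabG p.1) = XGsets (stabG q.1) := congrArg CoarseStructure.sets h
  exact stab_sets_ne p.2 q.2 hne1 hsets


end ManyCS

end Aux

/-- There exist `2^𝔠` distinct λ-tight finitary coarse structures on `ω`
that are not δ-tight. -/
theorem many_lambdaTight_not_deltaTight :
    ∃ S : Set (CoarseStructure ℕ),
      Cardinal.mk S = 2 ^ Cardinal.continuum ∧
      ∀ C ∈ S, C.Finitary ∧
        (∀ A B : Set ℕ, ¬ C.Bounded A → ¬ C.Bounded B → C.Linked A B) ∧
        ¬ (∀ A B : Set ℕ, ¬ C.Bounded A → ¬ C.Bounded B → C.Close A B) := by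
  refine ⟨Set.range ManyCS.CpF, ?_, ?_⟩
  · rw [Cardinal.mk_range_eq ManyCS.CpF ManyCS.CpF_injective]
    exact ManyCS.card_free_ultrafilters
  · rintro C ⟨p, rfl⟩
    exact ⟨ManyCS.finitary _ _, ManyCS.linked p.1 p.2, ManyCS.not_deltaTight p.1 p.2⟩
end
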